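/- Let H be a Hopf algebra over a field k, and let m : H ⊗ H → H be a coalgebra morphism satisfying m(a ⊗ bc) = m(a₁ ⊗ b)·m(a₂ ⊗ c) for all a,b,c ∈ H (Sweedler notation). Then m(a ⊗ 1) = ε(a)·1 for all a ∈ H. -/

import Mathlib

open TensorProduct

noncomputable def mbar (k : Type*) {H : Type*} [Field k] [Ring H] [HopfAlgebra k H]
    (Φ : H →ₗ[k] H) (m : H ⊗[k] H →ₗ[k] H) : H ⊗[k] H →ₗ[k] H :=
  (LinearMap.mul' k H) ∘ₗ (TensorProduct.map Φ m) ∘ₗ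
    (TensorProduct.assoc k H H H).toLinearMap ∘ₗ
    (TensorProduct.map Coalgebra.comul LinearMap.id)

theorem stmt0 (k H : Type*) [Field k] [Ring H] [HopfAlgebra k H]
    (m : H ⊗[k] H →ₗ[k] H)
    (hm_comul : Coalgebra.comul ∘ₗ m
      = (TensorProduct.map m m) ∘ₗ (TensorProduct.tensorTensorTensorComm k H H H H).toLinearMap
          ∘ₗ (TensorProduct.map Coalgebra.comul Coalgebra.comul))
    (hm_counit : Coalgebra.counit ∘ₗ m
      = (TensorProduct.lid k k).toLinearMap ∘ₗ
          TensorProduct.map Coalgebra.counit Coalgebra.counit)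
    (h5 : m ∘ₗ TensorProduct.map LinearMap.id (LinearMap.mul' k H)
      = (LinearMap.mul' k H) ∘ₗ TensorProduct.map m m ∘ₗ
          (TensorProduct.tensorTensorTensorComm k H H H H).toLinearMap ∘ₗ
          TensorProduct.map Coalgebra.comul LinearMap.id) :
    ∀ a : H, m (a ⊗ₜ[k] (1 : H)) = (Coalgebra.counit (R := k) a) • (1 : H) := by
  classical
  -- the linear map `x ↦ m (x ⊗ₜ 1)`
  set f : H →ₗ[k] H := m ∘ₗ (TensorProduct.mk k H H).flip 1 with hf
  have hfapp : ∀ x : H, f x = m (x ⊗ₜ[k] 1) := fun x => rfl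
  set S : H →ₗ[k] H := HopfAlgebra.antipode (R := k) with hS
  -- Fact 1: comul (f x) = ∑ f(x₁) ⊗ f(x₂)
  have fact1 : ∀ (x : H) (ρ : Coalgebra.Repr k x (H × H)),
      Coalgebra.comul (R := k) (f x)
        = ∑ i ∈ ρ.index, f (ρ.left i) ⊗ₜ[k] f (ρ.right i) := by
    intro x ρ
    have h := congr($hm_comul (x ⊗ₜ[k] (1 : H)))
    simp only [LinearMap.coe_comp, Function.comp_apply, LinearEquiv.coe_coe,
      TensorProduct.map_tmul] at h
    rw [Bialgebra.comul_one, ← ρ.eq] at h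
    simp only [Algebra.TensorProduct.one_def, TensorProduct.sum_tmul, map_sum,
      TensorProduct.tensorTensorTensorComm_tmul, TensorProduct.map_tmul] at h
    simpa [hfapp] using h
  -- Fact 2: counit (f x) = counit x
  have fact2 : ∀ x : H, Coalgebra.counit (R := k) (f x) = Coalgebra.counit (R := k) x := by
    intro x
    have h := congr($hm_counit (x ⊗ₜ[k] (1 : H)))
    simpa [hfapp] using h
  -- Fact 3: f x = ∑ f(x₁) * f(x₂)
  have fact3 : ∀ (x : H) (ρ : Coalgebra.Repr k x (H × H)),
      f x = ∑ i ∈ ρ.index, f (ρ.left i) * f (ρ.right i) := by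
    intro x ρ
    have h := congr($h5 (x ⊗ₜ[k] ((1 : H) ⊗ₜ[k] (1 : H))))
    simp only [LinearMap.coe_comp, Function.comp_apply, LinearEquiv.coe_coe,
      TensorProduct.map_tmul, LinearMap.id_coe, id_eq, LinearMap.mul'_apply, mul_one] at h
    rw [← ρ.eq] at h
    simp only [TensorProduct.sum_tmul, map_sum,
      TensorProduct.tensorTensorTensorComm_tmul, TensorProduct.map_tmul,
      LinearMap.mul'_apply] at h
    simpa [hfapp] using h
  -- Fact B: ∑ S(f(x₁)) * f(x₂) = counit x • 1
  have factB : ∀ (x : H) (ρ : Coalgebra.Repr k x (H × H)),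
      ∑ i ∈ ρ.index, S (f (ρ.left i)) * f (ρ.right i)
        = (Coalgebra.counit (R := k) x) • (1 : H) := by
    intro x ρ
    have h := HopfAlgebra.mul_antipode_rTensor_comul_apply (R := k) (f x)
    rw [fact1 x ρ] at h
    simp only [map_sum, LinearMap.rTensor_tmul, map_sum, LinearMap.mul'_apply] at h
    rw [h, fact2, Algebra.smul_def, mul_one]
  intro a
  set r : Coalgebra.Repr k a (H × H) := Coalgebra.Repr.arbitrary k a with hr
  set r1 : (i : H × H) → Coalgebra.Repr k (r.left i) (H × H) :=
    fun i => Coalgebra.Repr.arbitrary k (r.left i) with hr1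
  set r2 : (i : H × H) → Coalgebra.Repr k (r.right i) (H × H) :=
    fun i => Coalgebra.Repr.arbitrary k (r.right i) with hr2
  -- Step A : f a = ∑ ε(a₁) • f(a₂)
  have stepA : f a = ∑ i ∈ r.index, Coalgebra.counit (R := k) (r.left i) • f (r.right i) := by
    have h := Coalgebra.sum_counit_tmul_map_eq (R := k) f a (repr := r)
    apply_fun (TensorProduct.lid k H) at h
    simp only [map_sum, TensorProduct.lid_tmul, one_smul] at h
    exact h.symm
  -- Step D : coassociativity rearrangement
  have stepD :
      ∑ i ∈ r.index, ∑ j ∈ (r2 i).index,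
        S (f (r.left i)) * (f ((r2 i).left j) * f ((r2 i).right j))
      = ∑ i ∈ r.index, ∑ j ∈ (r1 i).index,
        S (f ((r1 i).left j)) * (f ((r1 i).right j) * f (r.right i)) := by
    have h := Coalgebra.sum_map_tmul_tmul_eq (R := k) (S ∘ₗ f) f f a
      (repr := r) (a₁ := r1) (a₂ := r2)
    apply_fun (LinearMap.mul' k H ∘ₗ (LinearMap.mul' k H).lTensor H) at h
    simpa [map_sum, LinearMap.mul'_apply] using h
  calc f a = ∑ i ∈ r.index, Coalgebra.counit (R := k) (r.left i) • f (r.right i) := stepA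
    _ = ∑ i ∈ r.index, ∑ j ∈ (r1 i).index,
          S (f ((r1 i).left j)) * f ((r1 i).right j) * f (r.right i) := by
        refine Finset.sum_congr rfl fun i _ => ?_
        rw [← Finset.sum_mul, factB (r.left i) (r1 i), smul_mul_assoc, one_mul]
    _ = ∑ i ∈ r.index, ∑ j ∈ (r1 i).index,
          S (f ((r1 i).left j)) * (f ((r1 i).right j) * f (r.right i)) := by
        simp [mul_assoc]
    _ = ∑ i ∈ r.index, ∑ j ∈ (r2 i).index,
          S (f (r.left i)) * (f ((r2 i).left j) * f ((r2 i).right j)) := stepD.symm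
    _ = ∑ i ∈ r.index, S (f (r.left i)) * f (r.right i) := by
        refine Finset.sum_congr rfl fun i _ => ?_
        rw [← Finset.mul_sum, ← fact3 (r.right i) (r2 i)]
    _ = (Coalgebra.counit (R := k) a) • (1 : H) := factB a r
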